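/- arXiv:1312.0516 — 2 statements merged into one kernel-verified Lean document; each statement's English description precedes it below -/
import Mathlib

section
/- Let A be a real N×N matrix, α > 0, and let f(X) = (1/2)‖X − A‖_F² − α·log det(X) on symmetric positive definite matrices X. If (A + Aᵀ)/2 = U·diag(λ₁,…,λ_N)·Uᵀ is an eigendecomposition, then X₀ = U·diag(μ₁,…,μ_N)·Uᵀ with μ_k = (λ_k + √(λ_k² + 4α))/2 minimizes f over all symmetric positive definite matrices. -/
open Matrix Real

/-- Squared Frobenius norm of a real square matrix. -/
noncomputable def frobSq {N : ℕ} (X : Matrix (Fin N) (Fin N) ℝ) : ℝ :=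
  Matrix.trace (Xᵀ * X)

namespace StmtAux

variable {N : ℕ}

lemma frobSq_nonneg' (Y : Matrix (Fin N) (Fin N) ℝ) : 0 ≤ Matrix.trace (Yᵀ * Y) := by
  rw [Matrix.trace]
  apply Finset.sum_nonneg
  intro i _
  simp only [Matrix.diag_apply, Matrix.mul_apply, Matrix.transpose_apply]
  apply Finset.sum_nonneg
  intro j _
  exact mul_self_nonneg _

lemma trace_eq_sum_eigs {H : Matrix (Fin N) (Fin N) ℝ} (hH : H.IsHermitian) :
    H.trace = ∑ i, hH.eigenvalues i := by
  conv_lhs => rw [hH.spectral_theorem]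
  rw [Unitary.conjStarAlgAut_apply, Matrix.trace_mul_cycle]
  have h1 : star (hH.eigenvectorUnitary : Matrix (Fin N) (Fin N) ℝ)
      * (hH.eigenvectorUnitary : Matrix (Fin N) (Fin N) ℝ) = 1 :=
    Matrix.mem_unitaryGroup_iff'.mp (hH.eigenvectorUnitary).2
  rw [h1, Matrix.one_mul, Matrix.trace_diagonal]
  simp

lemma logdet_le_trace {H : Matrix (Fin N) (Fin N) ℝ} (hH : H.PosDef) :
    Real.log H.det ≤ H.trace - N := by
  rw [hH.isHermitian.det_eq_prod_eigenvalues, trace_eq_sum_eigs hH.isHermitian]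
  have hpos : ∀ i : Fin N, 0 < hH.isHermitian.eigenvalues i := hH.eigenvalues_pos
  simp only [RCLike.ofReal_real_eq_id, id_eq]
  rw [Real.log_prod (fun i _ => (hpos i).ne')]
  calc ∑ i, Real.log (hH.isHermitian.eigenvalues i)
      ≤ ∑ i, (hH.isHermitian.eigenvalues i - 1) :=
        Finset.sum_le_sum fun i _ => Real.log_le_sub_one_of_pos (hpos i)
    _ = (∑ i, hH.isHermitian.eigenvalues i) - N := by
        rw [Finset.sum_sub_distrib]; simp

lemma posDef_conj {B M : Matrix (Fin N) (Fin N) ℝ} (hM : M.PosDef)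
    (hB : IsUnit B.det) : (B * M * Bᵀ).PosDef := by
  have hMt : Mᵀ = M := by
    have := hM.isHermitian
    rwa [Matrix.IsHermitian, Matrix.conjTranspose_eq_transpose_of_trivial] at this
  refine Matrix.PosDef.of_dotProduct_mulVec_pos ?_ ?_
  · show (B * M * Bᵀ)ᴴ = _
    rw [Matrix.conjTranspose_eq_transpose_of_trivial]
    simp [Matrix.transpose_mul, hMt, Matrix.mul_assoc]
  · intro x hx
    have hy : Bᵀ *ᵥ x ≠ 0 := by
      intro h
      apply hx
      have hinj : Function.Injective (Bᵀ).mulVec :=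
        Matrix.mulVec_injective_iff_isUnit.mpr
          ((Matrix.isUnit_iff_isUnit_det _).mpr (by rwa [Matrix.det_transpose]))
      have : Bᵀ *ᵥ x = Bᵀ *ᵥ 0 := by simpa using h
      exact hinj this
    have hpos := hM.dotProduct_mulVec_pos hy
    have hrw : star x ⬝ᵥ ((B * M * Bᵀ) *ᵥ x)
        = star (Bᵀ *ᵥ x) ⬝ᵥ (M *ᵥ (Bᵀ *ᵥ x)) := by
      simp only [star_trivial, ← Matrix.mulVec_mulVec]
      rw [Matrix.dotProduct_mulVec x B, ← Matrix.mulVec_transpose]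
    rwa [hrw]

open scoped MatrixOrder in
lemma logdet_mul_le {P X : Matrix (Fin N) (Fin N) ℝ} (hP : P.PosDef) (hX : X.PosDef) :
    Real.log (P * X).det ≤ (P * X).trace - N := by
  set S := CFC.sqrt P with hS
  have hSS : S * S = P := CFC.sqrt_mul_sqrt_self P hP.posSemidef.nonneg
  have hSt : Sᵀ = S := by
    have := (CFC.sqrt_nonneg P).posSemidef.isHermitian
    rwa [Matrix.IsHermitian, Matrix.conjTranspose_eq_transpose_of_trivial] at this
  have hdetS : IsUnit S.det := by
    have hm : S.det * S.det = P.det := by rw [← Matrix.det_mul, hSS]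
    have hP0 := hP.det_pos
    refine isUnit_iff_ne_zero.mpr fun h => ?_
    rw [h, mul_zero] at hm
    exact hP0.ne hm
  have hH : (S * X * S).PosDef := by
    have := posDef_conj hX hdetS
    rwa [hSt] at this
  have hdet : (S * X * S).det = (P * X).det := by
    rw [Matrix.det_mul, Matrix.det_mul, Matrix.det_mul, ← hSS, Matrix.det_mul]; ring
  have htr : (S * X * S).trace = (P * X).trace := by
    rw [Matrix.trace_mul_cycle, hSS]
  calc Real.log (P * X).det = Real.log (S * X * S).det := by rw [hdet]
    _ ≤ (S * X * S).trace - N := logdet_le_trace hH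
    _ = (P * X).trace - N := by rw [htr]

lemma frob_expand (P Q : Matrix (Fin N) (Fin N) ℝ) :
    Matrix.trace ((P + Q)ᵀ * (P + Q))
      = Matrix.trace (Pᵀ * P) + 2 * Matrix.trace (Pᵀ * Q) + Matrix.trace (Qᵀ * Q) := by
  have hsym : Matrix.trace (Qᵀ * P) = Matrix.trace (Pᵀ * Q) := by
    rw [← Matrix.trace_transpose (Qᵀ * P), Matrix.transpose_mul, Matrix.transpose_transpose,
      Matrix.trace_mul_comm]
  rw [Matrix.transpose_add, Matrix.add_mul, Matrix.mul_add, Matrix.mul_add,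
    Matrix.trace_add, Matrix.trace_add, Matrix.trace_add, hsym]
  ring

end StmtAux

open StmtAux in
theorem stmt0 {N : ℕ} (A U : Matrix (Fin N) (Fin N) ℝ) (α : ℝ) (hα : 0 < α)
    (lam : Fin N → ℝ)
    (hU : U * Uᵀ = 1 ∧ Uᵀ * U = 1)
    (hA : (1/2 : ℝ) • (A + Aᵀ) = U * Matrix.diagonal lam * Uᵀ)
    (X₀ : Matrix (Fin N) (Fin N) ℝ)
    (hX₀ : X₀ = U * Matrix.diagonal
      (fun k => (lam k + Real.sqrt ((lam k)^2 + 4*α)) / 2) * Uᵀ) :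
    X₀.PosDef ∧ ∀ X : Matrix (Fin N) (Fin N) ℝ, X.PosDef →
      (1/2) * frobSq (X₀ - A) - α * Real.log X₀.det ≤
      (1/2) * frobSq (X - A) - α * Real.log X.det := by
  set μ : Fin N → ℝ := fun k => (lam k + Real.sqrt ((lam k)^2 + 4*α)) / 2 with hμ
  have hμpos : ∀ k, 0 < μ k := by
    intro k
    have h0 : (0:ℝ) ≤ (lam k)^2 + 4*α := by positivity
    have hs : Real.sqrt ((lam k)^2 + 4*α) ^ 2 = (lam k)^2 + 4*α := Real.sq_sqrt h0
    have hsn : 0 ≤ Real.sqrt ((lam k)^2 + 4*α) := Real.sqrt_nonneg _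
    simp only [hμ]
    nlinarith [hs, hsn, hα]
  have hq : ∀ k, μ k * μ k - μ k * lam k = α := by
    intro k
    have h0 : (0:ℝ) ≤ (lam k)^2 + 4*α := by positivity
    have hs : Real.sqrt ((lam k)^2 + 4*α) ^ 2 = (lam k)^2 + 4*α := Real.sq_sqrt h0
    simp only [hμ]
    nlinarith [hs]
  have hUdet : IsUnit U.det := by
    have := congrArg Matrix.det hU.1
    rw [Matrix.det_mul, Matrix.det_one] at this
    exact IsUnit.of_mul_eq_one _ this
  have hX₀pos : X₀.PosDef := by
    rw [hX₀]
    exact posDef_conj (Matrix.posDef_diagonal_iff.mpr hμpos) hUdet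
  refine ⟨hX₀pos, ?_⟩
  set B : Matrix (Fin N) (Fin N) ℝ := (1/2 : ℝ) • (A + Aᵀ) with hB
  -- key: X₀ * (X₀ - B) = α • 1
  have hconj : ∀ D E : Matrix (Fin N) (Fin N) ℝ,
      (U * D * Uᵀ) * (U * E * Uᵀ) = U * (D * E) * Uᵀ := by
    intro D E
    calc (U * D * Uᵀ) * (U * E * Uᵀ) = U * (D * ((Uᵀ * U) * (E * Uᵀ))) := by
          simp only [Matrix.mul_assoc]
      _ = U * (D * E) * Uᵀ := by rw [hU.2, Matrix.one_mul]; simp only [Matrix.mul_assoc]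
  have hkey : X₀ * (X₀ - B) = α • (1 : Matrix (Fin N) (Fin N) ℝ) := by
    rw [Matrix.mul_sub, hA, hX₀, hconj, hconj, Matrix.diagonal_mul_diagonal,
      Matrix.diagonal_mul_diagonal, ← Matrix.sub_mul, ← Matrix.mul_sub]
    have hdd : (Matrix.diagonal fun i => μ i * μ i)
        - Matrix.diagonal (fun i => μ i * lam i) = α • (1 : Matrix (Fin N) (Fin N) ℝ) := by
      ext i j
      by_cases h : i = j
      · subst h; simpa using hq i
      · simp [Matrix.diagonal_apply, Matrix.one_apply, h]
    rw [hdd, Matrix.mul_smul, Matrix.mul_one, Matrix.smul_mul, hU.1]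
  have hX₀det : IsUnit X₀.det := isUnit_iff_ne_zero.mpr hX₀pos.det_pos.ne'
  have hinv : X₀⁻¹ = α⁻¹ • (X₀ - B) := by
    apply Matrix.inv_eq_right_inv
    rw [Matrix.mul_smul, hkey, smul_smul, inv_mul_cancel₀ hα.ne', one_smul]
  have hBX : X₀ - B = α • X₀⁻¹ := by
    rw [hinv, smul_smul, mul_inv_cancel₀ hα.ne', one_smul]
  intro X hX
  set Y : Matrix (Fin N) (Fin N) ℝ := X - X₀ with hY
  have hXt : Xᵀ = X := by
    have := hX.isHermitian
    rwa [Matrix.IsHermitian, Matrix.conjTranspose_eq_transpose_of_trivial] at this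
  have hX₀t : X₀ᵀ = X₀ := by
    have := hX₀pos.isHermitian
    rwa [Matrix.IsHermitian, Matrix.conjTranspose_eq_transpose_of_trivial] at this
  have hYt : Yᵀ = Y := by rw [hY, Matrix.transpose_sub, hXt, hX₀t]
  -- frobenius expansion
  have hfrob : frobSq (X - A) = frobSq Y + 2 * Matrix.trace (Yᵀ * (X₀ - A)) + frobSq (X₀ - A) := by
    have hdec : X - A = Y + (X₀ - A) := by rw [hY]; abel
    rw [hdec]
    exact frob_expand Y (X₀ - A)
  -- the cross term
  have hYA : Matrix.trace (Y * Aᵀ) = Matrix.trace (Y * A) := by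
    calc Matrix.trace (Y * Aᵀ) = Matrix.trace ((Y * Aᵀ)ᵀ) := (Matrix.trace_transpose _).symm
      _ = Matrix.trace (A * Yᵀ) := by rw [Matrix.transpose_mul, Matrix.transpose_transpose]
      _ = Matrix.trace (Y * A) := by rw [hYt, Matrix.trace_mul_comm]
  have hYB : Matrix.trace (Y * B) = Matrix.trace (Y * A) := by
    rw [hB, Matrix.mul_smul, Matrix.trace_smul, Matrix.mul_add, Matrix.trace_add, hYA]
    simp; ring
  have hcross : Matrix.trace (Yᵀ * (X₀ - A)) = α * Matrix.trace (X₀⁻¹ * Y) := by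
    rw [hYt]
    have h1 : Matrix.trace (Y * (X₀ - A)) = Matrix.trace (Y * (X₀ - B)) := by
      rw [Matrix.mul_sub, Matrix.mul_sub, Matrix.trace_sub, Matrix.trace_sub, hYB]
    rw [h1, hBX, Matrix.mul_smul, Matrix.trace_smul, Matrix.trace_mul_comm]
    simp
  -- log-det inequality
  have hlog : Real.log X.det - Real.log X₀.det ≤ Matrix.trace (X₀⁻¹ * Y) := by
    have hinvX₀ : X₀⁻¹.PosDef := hX₀pos.inv
    have hmul := logdet_mul_le hinvX₀ hX
    have hdet : (X₀⁻¹ * X).det = X₀.det⁻¹ * X.det := by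
      rw [Matrix.det_mul, Matrix.det_nonsing_inv, Ring.inverse_eq_inv']
    have hlogdet : Real.log (X₀⁻¹ * X).det = Real.log X.det - Real.log X₀.det := by
      rw [hdet, Real.log_mul (inv_ne_zero hX₀pos.det_pos.ne') hX.det_pos.ne',
        Real.log_inv]
      ring
    have htr : Matrix.trace (X₀⁻¹ * Y) = Matrix.trace (X₀⁻¹ * X) - N := by
      rw [hY, Matrix.mul_sub, Matrix.trace_sub, Matrix.nonsing_inv_mul X₀ hX₀det,
        Matrix.trace_one]
      simp
    rw [htr, ← hlogdet]
    exact hmul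
  have hα' := mul_le_mul_of_nonneg_left hlog hα.le
  have hfnn : 0 ≤ frobSq Y := frobSq_nonneg' Y
  rw [hfrob]
  rw [hcross] at *
  nlinarith [hfnn, hα', hcross]
end

section
/- Let Y ∈ ℝ^{m×n} have singular value decomposition Y = U·diag(σ₁,…,σ_r)·Vᵀ, and let τ > 0. Then the matrix P_τ(Y) = U·diag(max(σ_i − τ, 0))·Vᵀ is the unique minimizer over X ∈ ℝ^{m×n} of (1/2)‖X − Y‖_F² + τ‖X‖_*, where ‖X‖_* is the nuclear norm (sum of singular values of X). -/
open Matrix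

/-- Nuclear norm of a real matrix: sum of its singular values, i.e. the sum of
the square roots of the eigenvalues of XᴴX. -/
noncomputable def nuclearNorm {m n : ℕ} (X : Matrix (Fin m) (Fin n) ℝ) : ℝ :=
  ∑ i, Real.sqrt ((Matrix.isHermitian_conjTranspose_mul_self X).eigenvalues i)

section helpers
variable {a b k : ℕ}

lemma real_conjT (A : Matrix (Fin a) (Fin b) ℝ) : Aᴴ = Aᵀ := by
  ext i j; simp [conjTranspose_apply]

lemma dot_mulVec_eq (M : Matrix (Fin a) (Fin b) ℝ) (v : Fin a → ℝ) (w : Fin b → ℝ) :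
    (M *ᵥ w) ⬝ᵥ v = w ⬝ᵥ (Mᵀ *ᵥ v) := by
  simp only [dotProduct, mulVec, transpose_apply, Finset.sum_mul, Finset.mul_sum]
  rw [Finset.sum_comm]
  apply Finset.sum_congr rfl; intros; apply Finset.sum_congr rfl; intros; ring

lemma dot_self_nonneg' (v : Fin k → ℝ) : 0 ≤ v ⬝ᵥ v :=
  Finset.sum_nonneg fun i _ => mul_self_nonneg _

lemma dot_le_sqrt' (v w : Fin k → ℝ) :
    v ⬝ᵥ w ≤ Real.sqrt (v ⬝ᵥ v) * Real.sqrt (w ⬝ᵥ w) := by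
  have h := Finset.sum_mul_sq_le_sq_mul_sq Finset.univ v w
  have hv : v ⬝ᵥ v = ∑ i, v i ^ 2 := by simp [dotProduct, sq]
  have hw : w ⬝ᵥ w = ∑ i, w i ^ 2 := by simp [dotProduct, sq]
  calc v ⬝ᵥ w ≤ Real.sqrt ((v ⬝ᵥ w)^2) := by
        rw [Real.sqrt_sq_eq_abs]; exact le_abs_self _
    _ ≤ Real.sqrt ((∑ i, v i ^ 2) * ∑ i, w i ^ 2) := Real.sqrt_le_sqrt h
    _ = Real.sqrt (v ⬝ᵥ v) * Real.sqrt (w ⬝ᵥ w) := by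
        rw [hv, hw, Real.sqrt_mul (Finset.sum_nonneg fun i _ => sq_nonneg _)]

lemma isometry_dot (V : Matrix (Fin a) (Fin b) ℝ) (hV : Vᴴ * V = 1)
    (w : Fin b → ℝ) : (V *ᵥ w) ⬝ᵥ (V *ᵥ w) = w ⬝ᵥ w := by
  rw [real_conjT] at hV
  rw [dotProduct_mulVec, ← vecMul_transpose, vecMul_vecMul, hV, vecMul_one]

lemma contract_dot (V : Matrix (Fin a) (Fin b) ℝ) (hV : Vᴴ * V = 1)
    (z : Fin a → ℝ) : (Vᴴ *ᵥ z) ⬝ᵥ (Vᴴ *ᵥ z) ≤ z ⬝ᵥ z := by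
  set w := Vᴴ *ᵥ z with hw
  have h1 : w ⬝ᵥ w = (V *ᵥ w) ⬝ᵥ z := by
    rw [dot_mulVec_eq V z w, hw, real_conjT]
  have h2 : (V *ᵥ w) ⬝ᵥ z ≤ Real.sqrt ((V *ᵥ w) ⬝ᵥ (V *ᵥ w)) * Real.sqrt (z ⬝ᵥ z) :=
    dot_le_sqrt' _ _
  rw [isometry_dot V hV w] at h2
  rw [h1]
  nlinarith [Real.sq_sqrt (dot_self_nonneg' w), Real.sq_sqrt (dot_self_nonneg' z),
    Real.sqrt_nonneg (w ⬝ᵥ w), Real.sqrt_nonneg (z ⬝ᵥ z),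
    sq_nonneg (Real.sqrt (w ⬝ᵥ w) - Real.sqrt (z ⬝ᵥ z)), h1 ▸ h2]

lemma col_mul {c : ℕ} (M : Matrix (Fin a) (Fin b) ℝ) (N : Matrix (Fin b) (Fin c) ℝ)
    (j : Fin c) : (fun i => (M * N) i j) = M *ᵥ (fun k => N k j) := by
  funext i; simp [mul_apply, mulVec, dotProduct]

lemma conjT_mul_apply (A B : Matrix (Fin a) (Fin b) ℝ) (j : Fin b) :
    (Aᴴ * B) j j = (fun i => A i j) ⬝ᵥ (fun i => B i j) := by
  simp [mul_apply, conjTranspose_apply, dotProduct]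

lemma trace_conjT_mul (A B : Matrix (Fin a) (Fin b) ℝ) :
    Matrix.trace (Aᴴ * B) = ∑ j, (fun i => A i j) ⬝ᵥ (fun i => B i j) := by
  simp [Matrix.trace, Matrix.diag, mul_apply, conjTranspose_apply, dotProduct]

lemma diagonal_mulVec' (f : Fin a → ℝ) (y : Fin a → ℝ) :
    (diagonal f) *ᵥ y = fun i => f i * y i := by
  funext i
  simp [mulVec, dotProduct, diagonal, Finset.sum_ite_eq]

lemma trace_conjT_comm (A B : Matrix (Fin a) (Fin b) ℝ) :
    Matrix.trace (Aᴴ * B) = Matrix.trace (Bᴴ * A) := by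
  rw [real_conjT, real_conjT, ← Matrix.trace_transpose (Aᵀ * B), transpose_mul,
    transpose_transpose]

end helpers

section svt
variable {m n r : ℕ}

lemma struct_bound (U : Matrix (Fin m) (Fin r) ℝ) (V : Matrix (Fin n) (Fin r) ℝ)
    (hU : Uᴴ * U = 1) (hV : Vᴴ * V = 1) (g : Fin r → ℝ) (c : ℝ)
    (hg : ∀ i, 0 ≤ g i) (hgc : ∀ i, g i ≤ c) (z : Fin n → ℝ) :
    ((U * diagonal g * Vᴴ) *ᵥ z) ⬝ᵥ ((U * diagonal g * Vᴴ) *ᵥ z) ≤ c^2 * (z ⬝ᵥ z) := by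
  have e1 : (U * diagonal g * Vᴴ) *ᵥ z = U *ᵥ (diagonal g *ᵥ (Vᴴ *ᵥ z)) := by
    rw [mulVec_mulVec, mulVec_mulVec]
  rw [e1, isometry_dot U hU, diagonal_mulVec']
  set y := Vᴴ *ᵥ z with hy
  have h2 : (fun i => g i * y i) ⬝ᵥ (fun i => g i * y i) ≤ c^2 * (y ⬝ᵥ y) := by
    simp only [dotProduct, Finset.mul_sum]
    apply Finset.sum_le_sum
    intro i _
    have h3 : g i * y i * (g i * y i) = g i ^ 2 * (y i * y i) := by ring
    rw [h3]
    exact mul_le_mul_of_nonneg_right (pow_le_pow_left₀ (hg i) (hgc i) 2) (mul_self_nonneg _)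
  have h4 : y ⬝ᵥ y ≤ z ⬝ᵥ z := contract_dot V hV z
  calc (fun i => g i * y i) ⬝ᵥ (fun i => g i * y i) ≤ c^2 * (y ⬝ᵥ y) := h2
    _ ≤ c^2 * (z ⬝ᵥ z) := mul_le_mul_of_nonneg_left h4 (sq_nonneg c)

lemma traceUDV (U : Matrix (Fin m) (Fin r) ℝ) (V : Matrix (Fin n) (Fin r) ℝ)
    (hU : Uᴴ * U = 1) (hV : Vᴴ * V = 1) (p q : Fin r → ℝ) :
    Matrix.trace ((U * diagonal p * Vᴴ)ᴴ * (U * diagonal q * Vᴴ)) = ∑ i, p i * q i := by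
  have e1 : (U * diagonal p * Vᴴ)ᴴ = V * diagonal p * Uᴴ := by
    rw [conjTranspose_mul, conjTranspose_mul, conjTranspose_conjTranspose,
      diagonal_conjTranspose]
    simp [Matrix.mul_assoc]
  rw [e1]
  have e2 : V * diagonal p * Uᴴ * (U * diagonal q * Vᴴ)
      = V * (diagonal p * diagonal q) * Vᴴ := by
    calc V * diagonal p * Uᴴ * (U * diagonal q * Vᴴ)
        = V * diagonal p * (Uᴴ * U) * diagonal q * Vᴴ := by simp only [Matrix.mul_assoc]
      _ = V * (diagonal p * diagonal q) * Vᴴ := by rw [hU]; simp only [Matrix.mul_one, Matrix.mul_assoc]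
  rw [e2, Matrix.trace_mul_cycle, ← Matrix.mul_assoc, hV, Matrix.one_mul,
    diagonal_mul_diagonal, Matrix.trace_diagonal]

end svt

section nuc
variable {m n r : ℕ}

lemma unit_col {a b : ℕ} (U : Matrix (Fin a) (Fin b) ℝ) (hU : Uᴴ * U = 1) (i : Fin b) :
    (fun k => U k i) ⬝ᵥ (fun k => U k i) = 1 := by
  have h := congrFun (congrFun hU i) i
  simpa [mul_apply, conjTranspose_apply, dotProduct, one_apply] using h

lemma nuclear_le (U : Matrix (Fin m) (Fin r) ℝ) (V : Matrix (Fin n) (Fin r) ℝ)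
    (d : Fin r → ℝ) (hd : ∀ i, 0 ≤ d i) (hU : Uᴴ * U = 1) (hV : Vᴴ * V = 1) :
    nuclearNorm (U * diagonal d * Vᴴ) ≤ ∑ i, d i := by
  set P := U * diagonal d * Vᴴ with hPdef
  set hA := Matrix.isHermitian_conjTranspose_mul_self P with hAdef
  set Q : Matrix (Fin n) (Fin n) ℝ := (hA.eigenvectorUnitary : Matrix (Fin n) (Fin n) ℝ)
    with hQdef
  have hQ1 : Qᴴ * Q = 1 := by
    rw [← star_eq_conjTranspose]; exact Unitary.coe_star_mul_self hA.eigenvectorUnitary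
  have hQ2 : Q * Qᴴ = 1 := by
    rw [← star_eq_conjTranspose]; exact Unitary.coe_mul_star_self hA.eigenvectorUnitary
  set μ : Fin n → ℝ := hA.eigenvalues with hμdef
  have hspec : Pᴴ * P = Q * diagonal μ * Qᴴ := by
    have h := hA.spectral_theorem
    simp at h
    rw [← star_eq_conjTranspose]
    exact h
  set q : Fin n → Fin n → ℝ := fun j => (fun i => Q i j) with hqdef
  have hunit : ∀ j, q j ⬝ᵥ q j = 1 := fun j => unit_col Q hQ1 j
  have heig : ∀ j, (Pᴴ * P) *ᵥ q j = μ j • q j := by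
    intro j
    have hqb : q j = ⇑(hA.eigenvectorBasis j) := by
      funext i; exact hA.eigenvectorUnitary_apply i j
    rw [hqb]; exact hA.mulVec_eigenvectorBasis j
  have hμeq : ∀ j, (P *ᵥ q j) ⬝ᵥ (P *ᵥ q j) = μ j := by
    intro j
    rw [dot_mulVec_eq, mulVec_mulVec, ← real_conjT, heig j, dotProduct_smul, smul_eq_mul,
      hunit j, mul_one]
  have hμ0 : ∀ j, 0 ≤ μ j := fun j => (hμeq j) ▸ dot_self_nonneg' _
  set e : Fin n → ℝ := fun j => if μ j = 0 then 0 else (Real.sqrt (μ j))⁻¹ with hedef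
  set W : Matrix (Fin m) (Fin n) ℝ := P * (Q * diagonal e * Qᴴ) with hWdef
  have hWt : Wᴴ = Q * diagonal e * Qᴴ * Pᴴ := by
    rw [hWdef]
    have he : star e = e := by funext i; exact star_trivial _
    simp only [conjTranspose_mul, conjTranspose_conjTranspose, diagonal_conjTranspose, he]
    simp only [Matrix.mul_assoc]
  have hWP : Wᴴ * P = Q * diagonal (fun j => e j * μ j) * Qᴴ := by
    rw [hWt]
    calc Q * diagonal e * Qᴴ * Pᴴ * P
        = Q * diagonal e * Qᴴ * (Pᴴ * P) := by rw [Matrix.mul_assoc]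
      _ = Q * diagonal e * Qᴴ * (Q * diagonal μ * Qᴴ) := by rw [hspec]
      _ = Q * diagonal e * (Qᴴ * Q) * diagonal μ * Qᴴ := by simp only [Matrix.mul_assoc]
      _ = Q * (diagonal e * diagonal μ) * Qᴴ := by
          rw [hQ1]; try simp only [Matrix.mul_one, Matrix.mul_assoc]
      _ = Q * diagonal (fun j => e j * μ j) * Qᴴ := by rw [diagonal_mul_diagonal]; try rfl
  have hWW : Wᴴ * W = Q * diagonal (fun j => e j * μ j * e j) * Qᴴ := by
    rw [hWt, hWdef]
    calc Q * diagonal e * Qᴴ * Pᴴ * (P * (Q * diagonal e * Qᴴ))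
        = Q * diagonal e * Qᴴ * (Pᴴ * P) * (Q * diagonal e * Qᴴ) := by
          simp only [Matrix.mul_assoc]
      _ = Q * diagonal e * Qᴴ * (Q * diagonal μ * Qᴴ) * (Q * diagonal e * Qᴴ) := by
          rw [hspec]
      _ = Q * diagonal e * (Qᴴ * Q) * diagonal μ * (Qᴴ * Q) * diagonal e * Qᴴ := by
          simp only [Matrix.mul_assoc]
      _ = Q * (diagonal e * diagonal μ * diagonal e) * Qᴴ := by
          rw [hQ1]; try simp only [Matrix.mul_one, Matrix.mul_assoc]
      _ = Q * diagonal (fun j => e j * μ j * e j) * Qᴴ := by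
          rw [diagonal_mul_diagonal, diagonal_mul_diagonal]; try rfl
  have hf01 : ∀ j, 0 ≤ e j * μ j * e j ∧ e j * μ j * e j ≤ 1 := by
    intro j
    rw [hedef]
    by_cases h : μ j = 0
    · simp [h]
    · have hpos : 0 < μ j := lt_of_le_of_ne (hμ0 j) (Ne.symm h)
      have hs : Real.sqrt (μ j) * Real.sqrt (μ j) = μ j := Real.mul_self_sqrt (hμ0 j)
      have hsne : Real.sqrt (μ j) ≠ 0 := ne_of_gt (Real.sqrt_pos.mpr hpos)
      simp only [h, if_false]
      have : (Real.sqrt (μ j))⁻¹ * μ j * (Real.sqrt (μ j))⁻¹ = 1 := by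
        field_simp
        try nlinarith [hs]
      rw [this]
      norm_num
  have hWcontract : ∀ z : Fin n → ℝ, (W *ᵥ z) ⬝ᵥ (W *ᵥ z) ≤ z ⬝ᵥ z := by
    intro z
    have h1 : (W *ᵥ z) ⬝ᵥ (W *ᵥ z) = z ⬝ᵥ ((Wᴴ * W) *ᵥ z) := by
      rw [dot_mulVec_eq W (W *ᵥ z) z, mulVec_mulVec, ← real_conjT]
    rw [h1, hWW]
    have h2 : (Q * diagonal (fun j => e j * μ j * e j) * Qᴴ) *ᵥ z
        = Q *ᵥ (diagonal (fun j => e j * μ j * e j) *ᵥ (Qᴴ *ᵥ z)) := by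
      rw [mulVec_mulVec, mulVec_mulVec]
    rw [h2]
    set y := Qᴴ *ᵥ z with hy
    have h3 : z ⬝ᵥ (Q *ᵥ (diagonal (fun j => e j * μ j * e j) *ᵥ y))
        = (diagonal (fun j => e j * μ j * e j) *ᵥ y) ⬝ᵥ y := by
      rw [dotProduct_comm, dot_mulVec_eq Q z _, ← real_conjT, ← hy, dotProduct_comm]
    rw [h3, diagonal_mulVec']
    have h4 : (fun i => (e i * μ i * e i) * y i) ⬝ᵥ y ≤ y ⬝ᵥ y := by
      simp only [dotProduct]
      apply Finset.sum_le_sum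
      intro i _
      rcases le_or_gt 0 (y i * y i) with hyy | hyy
      · calc e i * μ i * e i * y i * y i = (e i * μ i * e i) * (y i * y i) := by ring
          _ ≤ 1 * (y i * y i) := mul_le_mul_of_nonneg_right (hf01 i).2 hyy
          _ = y i * y i := one_mul _
      · exact absurd hyy (not_lt.mpr (mul_self_nonneg _))
    have h5 : y ⬝ᵥ y = z ⬝ᵥ z := by
      rw [hy]
      apply isometry_dot Qᴴ
      rw [conjTranspose_conjTranspose]; exact hQ2
    calc (fun i => (e i * μ i * e i) * y i) ⬝ᵥ y ≤ y ⬝ᵥ y := h4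
      _ = z ⬝ᵥ z := h5
  have hNP : nuclearNorm P = Matrix.trace (Wᴴ * P) := by
    rw [hWP, Matrix.trace_mul_cycle, hQ1, Matrix.one_mul, Matrix.trace_diagonal]
    apply Finset.sum_congr rfl
    intro j _
    by_cases h : μ j = 0
    · show Real.sqrt (μ j) = e j * μ j
      rw [hedef]; simp [h]
    · show Real.sqrt (μ j) = e j * μ j
      have hpos : 0 < μ j := lt_of_le_of_ne (hμ0 j) (Ne.symm h)
      have hs : Real.sqrt (μ j) * Real.sqrt (μ j) = μ j := Real.mul_self_sqrt (hμ0 j)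
      have hsne : Real.sqrt (μ j) ≠ 0 := ne_of_gt (Real.sqrt_pos.mpr hpos)
      rw [hedef]
      simp only [h, if_false]
      field_simp
      try nlinarith [hs]
  have hstep : Matrix.trace (Wᴴ * P) = Matrix.trace (((W * V)ᴴ * U) * diagonal d) := by
    conv_lhs => rw [hPdef]
    rw [show Wᴴ * (U * diagonal d * Vᴴ) = (Wᴴ * (U * diagonal d)) * Vᴴ by
      simp only [Matrix.mul_assoc], Matrix.trace_mul_comm]
    simp only [conjTranspose_mul, Matrix.mul_assoc]
  have hentry : ∀ i : Fin r, ((W * V)ᴴ * U) i i ≤ 1 := by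
    intro i
    rw [conjT_mul_apply, col_mul]
    calc (W *ᵥ fun k => V k i) ⬝ᵥ (fun k => U k i)
        ≤ Real.sqrt ((W *ᵥ fun k => V k i) ⬝ᵥ (W *ᵥ fun k => V k i)) *
          Real.sqrt ((fun k => U k i) ⬝ᵥ (fun k => U k i)) := dot_le_sqrt' _ _
      _ ≤ 1 := by
          rw [unit_col U hU i, Real.sqrt_one, mul_one]
          calc Real.sqrt ((W *ᵥ fun k => V k i) ⬝ᵥ (W *ᵥ fun k => V k i))
              ≤ Real.sqrt ((fun k => V k i) ⬝ᵥ (fun k => V k i)) :=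
                Real.sqrt_le_sqrt (hWcontract _)
            _ = 1 := by rw [unit_col V hV i, Real.sqrt_one]
  rw [hNP, hstep]
  have htr : Matrix.trace (((W * V)ᴴ * U) * diagonal d)
      = ∑ i, ((W * V)ᴴ * U) i i * d i := by
    simp [Matrix.trace, Matrix.diag, mul_diagonal]
  rw [htr]
  apply Finset.sum_le_sum
  intro i _
  calc ((W * V)ᴴ * U) i i * d i ≤ 1 * d i :=
        mul_le_mul_of_nonneg_right (hentry i) (hd i)
    _ = d i := one_mul _

end nuc

lemma dual_bound {m n : ℕ} (X G : Matrix (Fin m) (Fin n) ℝ) (c : ℝ) (hc : 0 ≤ c)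
    (hG : ∀ z : Fin n → ℝ, (G *ᵥ z) ⬝ᵥ (G *ᵥ z) ≤ c^2 * (z ⬝ᵥ z)) :
    Matrix.trace (Gᴴ * X) ≤ c * nuclearNorm X := by
  set hA := Matrix.isHermitian_conjTranspose_mul_self X with hAdef
  set Q : Matrix (Fin n) (Fin n) ℝ := (hA.eigenvectorUnitary : Matrix (Fin n) (Fin n) ℝ) with hQdef
  have hQ1 : Qᴴ * Q = 1 := by
    rw [← star_eq_conjTranspose]; exact Unitary.coe_star_mul_self hA.eigenvectorUnitary
  have hQ2 : Q * Qᴴ = 1 := by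
    rw [← star_eq_conjTranspose]; exact Unitary.coe_mul_star_self hA.eigenvectorUnitary
  set q : Fin n → Fin n → ℝ := fun j => (fun i => Q i j) with hqdef
  have hqb : ∀ j, q j = ⇑(hA.eigenvectorBasis j) := by
    intro j; funext i; exact hA.eigenvectorUnitary_apply i j
  have hunit : ∀ j, q j ⬝ᵥ q j = 1 := by
    intro j
    have h := congrFun (congrFun hQ1 j) j
    simpa [mul_apply, conjTranspose_apply, dotProduct, one_apply] using h
  have heig : ∀ j, (Xᴴ * X) *ᵥ q j = hA.eigenvalues j • q j := by
    intro j; rw [hqb j]; exact hA.mulVec_eigenvectorBasis j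
  have hlam : ∀ j, (X *ᵥ q j) ⬝ᵥ (X *ᵥ q j) = hA.eigenvalues j := by
    intro j
    rw [dot_mulVec_eq, mulVec_mulVec, ← real_conjT, heig j, dotProduct_smul, smul_eq_mul,
      hunit j, mul_one]
  have step1 : Matrix.trace (Gᴴ * X) = Matrix.trace ((G * Q)ᴴ * (X * Q)) := by
    symm
    rw [conjTranspose_mul, Matrix.trace_mul_cycle, Matrix.mul_assoc X Q Qᴴ, hQ2, Matrix.mul_one,
      Matrix.trace_mul_comm]
  rw [step1, trace_conjT_mul]
  have step2 : ∀ j : Fin n, (fun i => (G * Q) i j) ⬝ᵥ (fun i => (X * Q) i j) ≤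
      c * Real.sqrt (hA.eigenvalues j) := by
    intro j
    rw [col_mul, col_mul]
    calc (G *ᵥ q j) ⬝ᵥ (X *ᵥ q j)
        ≤ Real.sqrt ((G *ᵥ q j) ⬝ᵥ (G *ᵥ q j)) * Real.sqrt ((X *ᵥ q j) ⬝ᵥ (X *ᵥ q j)) :=
          dot_le_sqrt' _ _
      _ ≤ c * Real.sqrt (hA.eigenvalues j) := by
          rw [hlam j]
          apply mul_le_mul_of_nonneg_right _ (Real.sqrt_nonneg _)
          calc Real.sqrt ((G *ᵥ q j) ⬝ᵥ (G *ᵥ q j)) ≤ Real.sqrt (c^2 * (q j ⬝ᵥ q j)) :=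
                Real.sqrt_le_sqrt (hG (q j))
            _ = c := by rw [hunit j, mul_one, Real.sqrt_sq hc]
  calc ∑ j, (fun i => (G * Q) i j) ⬝ᵥ (fun i => (X * Q) i j)
      ≤ ∑ j, c * Real.sqrt (hA.eigenvalues j) := Finset.sum_le_sum fun j _ => step2 j
    _ = c * nuclearNorm X := by rw [← Finset.mul_sum]; rfl


theorem stmt11 {m n r : ℕ} (Y : Matrix (Fin m) (Fin n) ℝ)
    (U : Matrix (Fin m) (Fin r) ℝ) (V : Matrix (Fin n) (Fin r) ℝ)
    (σ : Fin r → ℝ) (hσ : ∀ i, 0 ≤ σ i)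
    (hU : Uᴴ * U = 1) (hV : Vᴴ * V = 1)
    (hY : Y = U * Matrix.diagonal σ * Vᴴ)
    (τ : ℝ) (hτ : 0 < τ)
    (P : Matrix (Fin m) (Fin n) ℝ)
    (hP : P = U * Matrix.diagonal (fun i => max (σ i - τ) 0) * Vᴴ) :
    (∀ X : Matrix (Fin m) (Fin n) ℝ,
      (1/2) * Matrix.trace ((P - Y)ᴴ * (P - Y)) + τ * nuclearNorm P ≤
      (1/2) * Matrix.trace ((X - Y)ᴴ * (X - Y)) + τ * nuclearNorm X) ∧
    (∀ X : Matrix (Fin m) (Fin n) ℝ, X ≠ P →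
      (1/2) * Matrix.trace ((P - Y)ᴴ * (P - Y)) + τ * nuclearNorm P <
      (1/2) * Matrix.trace ((X - Y)ᴴ * (X - Y)) + τ * nuclearNorm X) := by
  set d : Fin r → ℝ := fun i => max (σ i - τ) 0 with hddef
  set g : Fin r → ℝ := fun i => σ i - d i with hgdef
  have hg0 : ∀ i, 0 ≤ g i := by
    intro i
    rcases le_total (σ i) τ with h | h
    · have : d i = 0 := max_eq_right (by linarith)
      simp only [hgdef, this]; linarith [hσ i]
    · have : d i = σ i - τ := max_eq_left (by linarith)
      simp only [hgdef, this]; linarith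
  have hgτ : ∀ i, g i ≤ τ := by
    intro i
    rcases le_total (σ i) τ with h | h
    · have : d i = 0 := max_eq_right (by linarith)
      simp only [hgdef, this]; linarith
    · have : d i = σ i - τ := max_eq_left (by linarith)
      simp only [hgdef, this]; linarith
  have hgd : ∀ i, g i * d i = τ * d i := by
    intro i
    rcases le_total (σ i) τ with h | h
    · have : d i = 0 := max_eq_right (by linarith)
      simp [this]
    · have h1 : d i = σ i - τ := max_eq_left (by linarith)
      have h2 : g i = τ := by simp only [hgdef, h1]; ring
      rw [h2]
  have hG : Y - P = U * diagonal g * Vᴴ := by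
    rw [hY, hP, ← Matrix.sub_mul, ← Matrix.mul_sub, ← diagonal_sub]
  have hid : ∀ X : Matrix (Fin m) (Fin n) ℝ,
      Matrix.trace ((X - Y)ᴴ * (X - Y)) =
      Matrix.trace ((X - P)ᴴ * (X - P)) - 2 * Matrix.trace ((Y - P)ᴴ * X)
        + 2 * Matrix.trace ((Y - P)ᴴ * P) + Matrix.trace ((P - Y)ᴴ * (P - Y)) := by
    intro X
    have e : X - Y = (X - P) - (Y - P) := by abel
    have e2 : P - Y = -(Y - P) := by abel
    have h1 : Matrix.trace ((X - Y)ᴴ * (X - Y)) =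
        Matrix.trace ((X - P)ᴴ * (X - P)) - Matrix.trace ((X - P)ᴴ * (Y - P))
          - Matrix.trace ((Y - P)ᴴ * (X - P)) + Matrix.trace ((Y - P)ᴴ * (Y - P)) := by
      rw [e]
      simp only [conjTranspose_sub, Matrix.sub_mul, Matrix.mul_sub, Matrix.trace_sub]
      ring
    have h2 : Matrix.trace ((X - P)ᴴ * (Y - P)) = Matrix.trace ((Y - P)ᴴ * (X - P)) :=
      trace_conjT_comm _ _
    have h3 : Matrix.trace ((Y - P)ᴴ * (X - P)) =
        Matrix.trace ((Y - P)ᴴ * X) - Matrix.trace ((Y - P)ᴴ * P) := by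
      rw [Matrix.mul_sub, Matrix.trace_sub]
    have h4 : Matrix.trace ((P - Y)ᴴ * (P - Y)) = Matrix.trace ((Y - P)ᴴ * (Y - P)) := by
      rw [e2]
      simp only [conjTranspose_neg, Matrix.neg_mul, Matrix.mul_neg, neg_neg]
    linarith
  have key : ∀ X : Matrix (Fin m) (Fin n) ℝ,
      (1/2) * Matrix.trace ((P - Y)ᴴ * (P - Y)) + τ * nuclearNorm P
        + (1/2) * Matrix.trace ((X - P)ᴴ * (X - P)) ≤
      (1/2) * Matrix.trace ((X - Y)ᴴ * (X - Y)) + τ * nuclearNorm X := by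
    intro X
    have F4 : Matrix.trace ((Y - P)ᴴ * X) ≤ τ * nuclearNorm X := by
      rw [hG]
      exact dual_bound X _ τ hτ.le (struct_bound U V hU hV g τ hg0 hgτ)
    have F2 : Matrix.trace ((Y - P)ᴴ * P) = τ * ∑ i, d i := by
      rw [hG]
      conv_lhs => rw [hP]
      rw [traceUDV U V hU hV g d, Finset.mul_sum]
      exact Finset.sum_congr rfl fun i _ => hgd i
    have F3 : nuclearNorm P ≤ ∑ i, d i := by
      rw [hP]
      exact nuclear_le U V d (fun i => le_max_right _ _) hU hV
    have F3' : τ * nuclearNorm P ≤ τ * ∑ i, d i := mul_le_mul_of_nonneg_left F3 hτ.le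
    have hidX := hid X
    linarith
  constructor
  · intro X
    have h := key X
    have hΔ : 0 ≤ Matrix.trace ((X - P)ᴴ * (X - P)) := by
      rw [trace_conjT_mul]
      exact Finset.sum_nonneg fun j _ => dot_self_nonneg' _
    linarith
  · intro X hXP
    have h := key X
    have hM : X - P ≠ 0 := sub_ne_zero.mpr hXP
    obtain ⟨i0, j0, hij⟩ : ∃ i j, (X - P) i j ≠ 0 := by
      by_contra hcon
      push_neg at hcon
      exact hM (by ext i j; simpa using hcon i j)
    have hΔ : 0 < Matrix.trace ((X - P)ᴴ * (X - P)) := by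
      rw [trace_conjT_mul]
      apply Finset.sum_pos' (fun j _ => dot_self_nonneg' _)
      refine ⟨j0, Finset.mem_univ _, ?_⟩
      apply Finset.sum_pos' (fun i _ => mul_self_nonneg _)
      exact ⟨i0, Finset.mem_univ _, mul_self_pos.mpr hij⟩
    linarith
end
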